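/- In an M-projectively flat spacetime, the energy-momentum tensor obeying the Einstein field equations with a cosmological term is proportional to the metric: if (V,g,R) is M-projectively flat and a symmetric bilinear form T on V satisfies Ric − (Scal/2)·g + Λ·g = κ·T with κ ≠ 0, then T = (1/κ)·(Λ − Scal/4)·g. -/

import Mathlib

/-- The Ricci tensor of a quadrilinear curvature tensor `R` on a real vector
space, computed with respect to a `g`-orthonormal basis `e` with signs `ε`:
`Ric(x,y) = Σ_a ε_a R(e_a, x, y, e_a)`. -/
noncomputable def ricci {V : Type*} [AddCommGroup V] [Module ℝ V]
    (R : V →ₗ[ℝ] V →ₗ[ℝ] V →ₗ[ℝ] V →ₗ[ℝ] ℝ) (e : Fin 4 → V) (ε : Fin 4 → ℝ)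
    (x y : V) : ℝ :=
  ∑ a, ε a * R (e a) x y (e a)

/-- The scalar curvature `Scal = Σ_a ε_a Ric(e_a, e_a)`. -/
noncomputable def scalarCurv {V : Type*} [AddCommGroup V] [Module ℝ V]
    (R : V →ₗ[ℝ] V →ₗ[ℝ] V →ₗ[ℝ] V →ₗ[ℝ] ℝ) (e : Fin 4 → V) (ε : Fin 4 → ℝ) : ℝ :=
  ∑ a, ε a * ricci R e ε (e a) (e a)

/-- The M-projective curvature tensor
`W(x,y,z,w) = R(x,y,z,w) + (1/6)[g(x,z)Ric(y,w) − g(x,w)Ric(y,z)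
  + Ric(x,z)g(y,w) − Ric(x,w)g(y,z)]`. -/
noncomputable def mProj {V : Type*} [AddCommGroup V] [Module ℝ V]
    (g : V →ₗ[ℝ] V →ₗ[ℝ] ℝ)
    (R : V →ₗ[ℝ] V →ₗ[ℝ] V →ₗ[ℝ] V →ₗ[ℝ] ℝ) (e : Fin 4 → V) (ε : Fin 4 → ℝ)
    (x y z w : V) : ℝ :=
  R x y z w + (1 / 6) * (g x z * ricci R e ε y w - g x w * ricci R e ε y z
    + ricci R e ε x z * g y w - ricci R e ε x w * g y z)

/-- In an M-projectively flat spacetime, the energy-momentum tensor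
obeying the Einstein field equations with a cosmological term is proportional to
the metric: `T = (1/κ)·(Λ − Scal/4)·g`. -/
theorem energyMomentum_of_mProjFlat
    {V : Type*} [AddCommGroup V] [Module ℝ V] [FiniteDimensional ℝ V]
    (hdim : Module.finrank ℝ V = 4)
    (g : V →ₗ[ℝ] V →ₗ[ℝ] ℝ)
    (hg_symm : ∀ x y, g x y = g y x)
    (hg_nondeg : ∀ x, (∀ y, g x y = 0) → x = 0)
    (R : V →ₗ[ℝ] V →ₗ[ℝ] V →ₗ[ℝ] V →ₗ[ℝ] ℝ)
    (hR_skew₁ : ∀ x y z w, R x y z w = - R y x z w)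
    (hR_skew₂ : ∀ x y z w, R x y z w = - R x y w z)
    (hR_pair : ∀ x y z w, R x y z w = R z w x y)
    (hR_bianchi : ∀ x y z w, R x y z w + R y z x w + R z x y w = 0)
    (e : Module.Basis (Fin 4) ℝ V) (ε : Fin 4 → ℝ)
    (hε : ∀ a, ε a = 1 ∨ ε a = -1)
    (horth : ∀ a b, g (e a) (e b) = if a = b then ε a else 0)
    (hflat : ∀ x y z w, mProj g R ⇑e ε x y z w = 0)
    (T : V →ₗ[ℝ] V →ₗ[ℝ] ℝ) (Λ κ : ℝ) (hκ : κ ≠ 0)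
    (hEFE : ∀ x y, ricci R ⇑e ε x y - (scalarCurv R ⇑e ε / 2) * g x y + Λ * g x y
      = κ * T x y) :
    ∀ x y, T x y = (1 / κ) * (Λ - scalarCurv R ⇑e ε / 4) * g x y := by
  have hε2 : ∀ a, ε a * ε a = 1 := by
    intro a; rcases hε a with h | h <;> simp [h]
  have hrepr : ∀ (v : V) (a : Fin 4), ε a * g (e a) v = e.repr v a := by
    intro v a
    conv_lhs => rw [← e.sum_repr v]
    rw [map_sum]
    simp only [map_smul, horth, smul_eq_mul, mul_ite, mul_zero]
    rw [Finset.sum_ite_eq]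
    simp only [Finset.mem_univ, if_true]
    rw [mul_comm (e.repr v a) (ε a), ← mul_assoc, hε2, one_mul]
  have key : ∀ (F : V →ₗ[ℝ] ℝ) (v : V),
      ∑ a, ε a * g (e a) v * F (e a) = F v := by
    intro F v
    have h1 : ∀ a : Fin 4, ε a * g (e a) v * F (e a) = e.repr v a * F (e a) := by
      intro a; rw [hrepr v a]
    rw [Finset.sum_congr rfl fun a _ => h1 a]
    conv_rhs => rw [← e.sum_repr v]
    rw [map_sum]
    simp [map_smul]
  -- Ricci as a bilinear map
  set RicL : V →ₗ[ℝ] V →ₗ[ℝ] ℝ :=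
    ∑ a, ε a • ((R (e a)).compr₂ (LinearMap.applyₗ (e a))) with hRicLdef
  have hRicL : ∀ u v, RicL u v = ricci R ⇑e ε u v := by
    intro u v
    simp [hRicLdef, ricci, LinearMap.sum_apply, LinearMap.smul_apply,
      LinearMap.compr₂_apply, LinearMap.applyₗ, smul_eq_mul]
    rfl
  have hRic : ∀ u v, ricci R ⇑e ε u v = scalarCurv R ⇑e ε / 4 * g u v := by
    intro u v
    have h4 : ∑ a : Fin 4, ε a * ε a = 4 := by simp [hε2]
    have e2 : ∑ a, ε a * g (e a) v * ricci R ⇑e ε u (e a) = ricci R ⇑e ε u v := by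
      have := key (RicL u) v
      simpa [hRicL] using this
    have e4 : ∑ a, ε a * g (e a) u * ricci R ⇑e ε (e a) v = ricci R ⇑e ε u v := by
      have := key (RicL.flip v) u
      simpa [hRicL, LinearMap.flip_apply] using this
    have expand : ∀ a : Fin 4, ε a * mProj g R ⇑e ε (e a) u v (e a)
        = ε a * R (e a) u v (e a)
          + (1/6) * (ε a * g (e a) v * ricci R ⇑e ε u (e a))
          - (1/6) * ricci R ⇑e ε u v * (ε a * ε a)
          + (1/6) * (ε a * g (e a) u * ricci R ⇑e ε (e a) v)
          - (1/6) * g u v * (ε a * ricci R ⇑e ε (e a) (e a)) := by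
      intro a
      have h1 : g (e a) (e a) = ε a := by simp [horth]
      have h2 : g u (e a) = g (e a) u := hg_symm u (e a)
      simp only [mProj, h1, h2]
      ring
    have h0 : (0 : ℝ) = ∑ a, ε a * mProj g R ⇑e ε (e a) u v (e a) := by
      simp [hflat]
    rw [Finset.sum_congr rfl fun a _ => expand a] at h0
    simp only [Finset.sum_add_distrib, Finset.sum_sub_distrib, ← Finset.mul_sum] at h0
    rw [h4, e2, e4] at h0
    have hric : ∑ a, ε a * R (e a) u v (e a) = ricci R ⇑e ε u v := rfl
    have hscal : ∑ a, ε a * ricci R ⇑e ε (e a) (e a) = scalarCurv R ⇑e ε := rfl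
    rw [hric, hscal] at h0
    linarith
  intro x y
  have h := hEFE x y
  rw [hRic x y] at h
  field_simp
  linarith
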